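/- Let S be a finite set, s₀ ∈ S, H ≥ 1, k ≥ 1, let P : S × S → ℝ be nonnegative with Σ_{s′∈S} P(s, s′) = 1 for every s ∈ S, and let R : S → ℝ^k. Call a function τ : {0,…,H} → S with τ(0) = s₀ a trajectory; let q(τ) := Π_{t=0}^{H−1} P(τ(t), τ(t+1)) be its probability, Φ(τ) := Σ_{t=0}^{H−1} R(τ(t)) ∈ ℝ^k its return, and V := Σ_τ q(τ)·Φ(τ) the value (the sum running over all trajectories). Then there exist m ≤ k + 1 distinct trajectories τ₁, …, τ_m with q(τᵢ) > 0 for each i, and weights p₁, …, p_m ≥ 0 with Σ_{i=1}^m pᵢ = 1, such that Σ_{i=1}^m pᵢ·Φ(τᵢ) = V. -/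

import Mathlib

open scoped BigOperators

lemma sum_q (S : Type*) [Fintype S] [DecidableEq S] (P : S → S → ℝ)
    (hP1 : ∀ s, ∑ s' : S, P s s' = 1) :
    ∀ (n : ℕ) (s₀ : S),
      ∑ f ∈ Finset.univ.filter (fun f : Fin (n+1) → S => f 0 = s₀),
        ∏ t : Fin n, P (f t.castSucc) (f t.succ) = 1 := by
  intro n
  induction n with
  | zero =>
    intro s₀
    have : Finset.univ.filter (fun f : Fin 1 → S => f 0 = s₀) = {fun _ => s₀} := by
      ext f
      simp only [Finset.mem_filter, Finset.mem_univ, true_and, Finset.mem_singleton]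
      constructor
      · intro h; funext i; have : i = 0 := Subsingleton.elim _ _; rw [this, h]
      · intro h; rw [h]
    simp [this]
  | succ n ih =>
    intro s₀
    have key : ∑ f ∈ Finset.univ.filter (fun f : Fin (n+2) → S => f 0 = s₀),
        ∏ t : Fin (n+1), P (f t.castSucc) (f t.succ)
        = ∑ g : Fin (n+1) → S, P s₀ (g 0) * ∏ t : Fin n, P (g t.castSucc) (g t.succ) := by
      apply Finset.sum_bij' (fun f _ => f ∘ Fin.succ) (fun g _ => Fin.cons s₀ g)
      · intro f hf; simp
      · intro g hg; simp [Finset.mem_filter]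
      · intro f hf
        simp only [Finset.mem_filter, Finset.mem_univ, true_and] at hf
        funext i
        cases i using Fin.cases with
        | zero => simp [hf]
        | succ j => simp
      · intro g hg; funext i; simp
      · intro f hf
        simp only [Finset.mem_filter, Finset.mem_univ, true_and] at hf
        simp [Fin.prod_univ_succ, hf, Function.comp_def]
    rw [key]
    rw [← Finset.sum_fiberwise (g := fun g : Fin (n+1) → S => g 0)
      (f := fun g => P s₀ (g 0) * ∏ t : Fin n, P (g t.castSucc) (g t.succ))]
    have : ∀ s : S, ∑ g ∈ Finset.univ.filter (fun g : Fin (n+1) → S => g 0 = s),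
        P s₀ (g 0) * ∏ t : Fin n, P (g t.castSucc) (g t.succ)
        = P s₀ s := by
      intro s
      rw [Finset.sum_congr rfl (fun g hg => by
        simp only [Finset.mem_filter] at hg
        rw [hg.2]), ← Finset.mul_sum, ih s, mul_one]
    rw [Finset.sum_congr rfl (fun s _ => this s), hP1]

/-- Theorem 4.2, existential content: every policy of a known
finite-horizon MDP (abstracted as the Markov chain on states it induces, with
per-state reward R(s) ∈ ℝ^k) admits a weighted trajectory set representation
with at most k+1 trajectories in its support whose weighted return equals the
value of the policy. -/
theorem stmt16 (S : Type*) [Fintype S] [DecidableEq S] (s₀ : S)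
    (H k : ℕ) (hH : 1 ≤ H) (hk : 1 ≤ k)
    (P : S → S → ℝ) (hP0 : ∀ s s', 0 ≤ P s s') (hP1 : ∀ s, ∑ s' : S, P s s' = 1)
    (R : S → EuclideanSpace ℝ (Fin k)) :
    ∃ (m : ℕ), m ≤ k + 1 ∧
      ∃ (τ : Fin m → (Fin (H + 1) → S)) (p : Fin m → ℝ),
        Function.Injective τ ∧
        (∀ i, τ i 0 = s₀) ∧
        (∀ i, 0 < ∏ t : Fin H, P (τ i t.castSucc) (τ i t.succ)) ∧
        (∀ i, 0 ≤ p i) ∧ (∑ i, p i = 1) ∧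
        ∑ i, p i • (∑ t : Fin H, R (τ i t.castSucc)) =
          ∑ τ' ∈ Finset.univ.filter (fun τ' : Fin (H + 1) → S => τ' 0 = s₀),
            (∏ t : Fin H, P (τ' t.castSucc) (τ' t.succ)) •
              (∑ t : Fin H, R (τ' t.castSucc)) := by
  classical
  obtain ⟨n, rfl⟩ : ∃ n, H = n + 1 := ⟨H - 1, (Nat.succ_pred_eq_of_pos hH).symm⟩
  set Hn := n + 1 with hHn
  set q : (Fin (Hn + 1) → S) → ℝ := fun f => ∏ t : Fin Hn, P (f t.castSucc) (f t.succ) with hq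
  set Φ : (Fin (Hn + 1) → S) → EuclideanSpace ℝ (Fin k) :=
    fun f => ∑ t : Fin Hn, R (f t.castSucc) with hΦ
  have hq0 : ∀ f, 0 ≤ q f := fun f => Finset.prod_nonneg fun t _ => hP0 _ _
  set A : Finset (Fin (Hn + 1) → S) := Finset.univ.filter (fun f => f 0 = s₀) with hA
  set B : Finset (Fin (Hn + 1) → S) := A.filter (fun f => 0 < q f) with hB
  have hBA : B ⊆ A := Finset.filter_subset _ _
  have hzero : ∀ f ∈ A, f ∉ B → q f = 0 := by
    intro f hfA hfB
    by_contra h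
    exact hfB (Finset.mem_filter.mpr ⟨hfA, lt_of_le_of_ne (hq0 f) (Ne.symm h)⟩)
  have hsumA : ∑ f ∈ A, q f = 1 := sum_q S P hP1 Hn s₀
  have hsumB : ∑ f ∈ B, q f = 1 :=
    (Finset.sum_subset hBA fun f hfA hfB => hzero f hfA hfB).trans hsumA
  have hVeq : ∑ f ∈ B, q f • Φ f = ∑ f ∈ A, q f • Φ f :=
    Finset.sum_subset hBA fun f hfA hfB => by rw [hzero f hfA hfB, zero_smul]
  have hmem : (∑ f ∈ A, q f • Φ f) ∈ convexHull ℝ (Φ '' ↑B) := by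
    rw [← hVeq, ← Finset.centerMass_eq_of_sum_1 B Φ hsumB]
    exact Finset.centerMass_mem_convexHull B (fun f _ => hq0 f) (by rw [hsumB]; norm_num)
      (fun f hf => Set.mem_image_of_mem _ hf)
  obtain ⟨ι, hfin, z, w, hzs, hai, hwpos, hwsum, hrep⟩ :=
    eq_pos_convex_span_of_mem_convexHull hmem
  have hcard : Fintype.card ι ≤ k + 1 := by
    have h1 := hai.card_le_finrank_succ
    have h2 : Module.finrank ℝ (vectorSpan ℝ (Set.range z)) ≤ k := by
      have := Submodule.finrank_le (vectorSpan ℝ (Set.range z))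
      rwa [finrank_euclideanSpace_fin] at this
    omega
  refine ⟨Fintype.card ι, hcard, ?_⟩
  set e : Fin (Fintype.card ι) ≃ ι := (Fintype.equivFin ι).symm with he
  have hchoice : ∀ i : ι, ∃ f, f ∈ B ∧ Φ f = z i := by
    intro i
    obtain ⟨f, hf, hfz⟩ := hzs (Set.mem_range_self i)
    exact ⟨f, hf, hfz⟩
  choose g hgB hgz using hchoice
  refine ⟨fun i => g (e i), fun i => w (e i), ?_, ?_, ?_, ?_, ?_, ?_⟩
  · intro i j hij
    have : z (e i) = z (e j) := by rw [← hgz (e i), ← hgz (e j)]; exact congrArg Φ hij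
    exact e.injective (hai.injective this)
  · intro i
    have := hBA (hgB (e i))
    rw [hA, Finset.mem_filter] at this
    exact this.2
  · intro i
    have := hgB (e i)
    rw [hB, Finset.mem_filter] at this
    exact this.2
  · exact fun i => (hwpos (e i)).le
  · rw [Equiv.sum_comp e w]; exact hwsum
  · calc ∑ i, w (e i) • Φ (g (e i)) = ∑ i, w (e i) • z (e i) := by
          exact Finset.sum_congr rfl fun i _ => by rw [hgz]
      _ = ∑ i, w i • z i := Equiv.sum_comp e (fun i => w i • z i)
      _ = ∑ f ∈ A, q f • Φ f := hrep
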